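/- Let m² > 0 and λ < 0. Suppose a sequence f : ℕ → ℝ has f_{j₀} ≠ 0 for some index j₀ with c_{j₀} ≠ 0. Then there exist indices (directions) in which the second variation of S(f) = (1/2)Σ f_j²(a_j + m²) + (λ/4!)Σ f_j⁴ c_j² is strictly positive and strictly negative respectively; concretely, for an extremal sequence f with f_{j₀}² = -3!(a_{j₀}+m²)/(λ c_{j₀}²), the second derivative of t ↦ S(f + t e_{j₀}) at t = 0 equals -2(a_{j₀}+m²) < 0, while for any index k with f_k = 0 the second derivative of t ↦ S(f + t e_k) at t = 0 equals a_k + m² > 0. -/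

import Mathlib

private lemma finsum_update_aux (h : ℕ → ℝ) (hh : (Function.support h).Finite) (i : ℕ) (x : ℝ) :
    ∑ᶠ j, Function.update h i x j = (∑ᶠ j, h j) + (x - h i) := by
  classical
  set S : Finset ℕ := hh.toFinset ∪ {i} with hS
  have hiS : i ∈ S := by simp [hS]
  have h1 : ∑ᶠ j, h j = ∑ j ∈ S, h j := by
    apply finsum_eq_sum_of_support_subset
    intro j hj; simp [hS, hj]
  have h2 : ∑ᶠ j, Function.update h i x j = ∑ j ∈ S, Function.update h i x j := by
    apply finsum_eq_sum_of_support_subset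
    intro j hj
    rcases eq_or_ne j i with rfl | hji
    · simp [hS]
    · simp only [Function.mem_support, Function.update_of_ne hji] at hj
      simp [hS, hj]
  rw [h1, h2, Finset.sum_update_of_mem hiS, Finset.sum_eq_sum_sdiff_singleton_add hiS h]
  ring

private lemma iter2_aux (A B D E : ℝ) :
    iteratedDeriv 2 (fun t : ℝ => A + B*(E+t)^2 + D*(E+t)^4) 0 = 2*B + 12*D*E^2 := by
  have h1 : deriv (fun t : ℝ => A + B*(E+t)^2 + D*(E+t)^4)
      = fun t => 2*B*(E+t) + 4*D*(E+t)^3 := by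
    funext t
    have hE : HasDerivAt (fun t : ℝ => E + t) 1 t := (hasDerivAt_id t).const_add E
    have := ((hasDerivAt_const t A).add ((hE.pow 2).const_mul B)).add ((hE.pow 4).const_mul D)
    rw [(show HasDerivAt (fun t : ℝ => A + B*(E+t)^2 + D*(E+t)^4) _ t from this).deriv]; push_cast; ring
  rw [iteratedDeriv_succ, iteratedDeriv_one, h1]
  have hE : HasDerivAt (fun t : ℝ => E + t) 1 (0:ℝ) := (hasDerivAt_id 0).const_add E
  have h2 := (hE.const_mul (2*B)).add ((hE.pow 3).const_mul (4*D))
  rw [(show HasDerivAt (fun t : ℝ => 2*B*(E+t) + 4*D*(E+t)^3) _ 0 from h2).deriv]; push_cast; ring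

private lemma second_var (a c : ℕ → ℝ) (m2 lam : ℝ)
    (f : ℕ → ℝ) (hfin : (Function.support f).Finite) (i : ℕ) :
    iteratedDeriv 2
        (fun t : ℝ =>
          (1 / 2) * ∑ᶠ j, (f j + t * (Pi.single i 1 : ℕ → ℝ) j) ^ 2 * (a j + m2) +
            (lam / 24) * ∑ᶠ j, (f j + t * (Pi.single i 1 : ℕ → ℝ) j) ^ 4 * c j ^ 2) 0 =
      (a i + m2) + lam * c i ^ 2 * f i ^ 2 / 2 := by
  classical
  set F1 : ℕ → ℝ := fun j => f j ^ 2 * (a j + m2) with hF1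
  set F2 : ℕ → ℝ := fun j => f j ^ 4 * c j ^ 2 with hF2
  have hfin1 : (Function.support F1).Finite :=
    hfin.subset (fun j hj => by
      simp only [Function.mem_support, hF1] at hj ⊢
      intro h; apply hj; simp [h])
  have hfin2 : (Function.support F2).Finite :=
    hfin.subset (fun j hj => by
      simp only [Function.mem_support, hF2] at hj ⊢
      intro h; apply hj; simp [h])
  have key : (fun t : ℝ =>
          (1 / 2) * ∑ᶠ j, (f j + t * (Pi.single i 1 : ℕ → ℝ) j) ^ 2 * (a j + m2) +
            (lam / 24) * ∑ᶠ j, (f j + t * (Pi.single i 1 : ℕ → ℝ) j) ^ 4 * c j ^ 2)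
      = fun t : ℝ =>
          ((1/2) * ((∑ᶠ j, F1 j) - F1 i) + (lam/24) * ((∑ᶠ j, F2 j) - F2 i))
          + ((a i + m2)/2) * (f i + t)^2 + (lam * c i ^ 2 / 24) * (f i + t)^4 := by
    funext t
    have e1 : (fun j => (f j + t * (Pi.single i 1 : ℕ → ℝ) j) ^ 2 * (a j + m2))
        = Function.update F1 i ((f i + t)^2 * (a i + m2)) := by
      funext j
      rcases eq_or_ne j i with rfl | hji
      · simp [Pi.single_eq_same]
      · simp [Function.update_of_ne hji, Pi.single_eq_of_ne hji, hF1]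
    have e2 : (fun j => (f j + t * (Pi.single i 1 : ℕ → ℝ) j) ^ 4 * c j ^ 2)
        = Function.update F2 i ((f i + t)^4 * c i ^ 2) := by
      funext j
      rcases eq_or_ne j i with rfl | hji
      · simp [Pi.single_eq_same]
      · simp [Function.update_of_ne hji, Pi.single_eq_of_ne hji, hF2]
    rw [e1, e2, finsum_update_aux F1 hfin1 i _, finsum_update_aux F2 hfin2 i _]
    ring
  rw [key, iter2_aux]
  ring

theorem nontrivial_extrema_are_saddle_points (a c : ℕ → ℝ) (ha : ∀ j, 0 ≤ a j)
    (m2 lam : ℝ) (hm2 : 0 < m2) (hlam : lam < 0)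
    (f : ℕ → ℝ) (hfin : (Function.support f).Finite)
    (j₀ : ℕ) (hfj₀ : f j₀ ≠ 0) (hcj₀ : c j₀ ≠ 0)
    (hext : f j₀ ^ 2 = -6 * (a j₀ + m2) / (lam * c j₀ ^ 2))
    (k : ℕ) (hfk : f k = 0) :
    (iteratedDeriv 2
        (fun t : ℝ =>
          (1 / 2) * ∑ᶠ j, (f j + t * (Pi.single j₀ 1 : ℕ → ℝ) j) ^ 2 * (a j + m2) +
            (lam / 24) * ∑ᶠ j, (f j + t * (Pi.single j₀ 1 : ℕ → ℝ) j) ^ 4 * c j ^ 2) 0 =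
        -2 * (a j₀ + m2) ∧ -2 * (a j₀ + m2) < 0) ∧
    (iteratedDeriv 2
        (fun t : ℝ =>
          (1 / 2) * ∑ᶠ j, (f j + t * (Pi.single k 1 : ℕ → ℝ) j) ^ 2 * (a j + m2) +
            (lam / 24) * ∑ᶠ j, (f j + t * (Pi.single k 1 : ℕ → ℝ) j) ^ 4 * c j ^ 2) 0 =
        a k + m2 ∧ 0 < a k + m2) := by
  have hpos : ∀ j, 0 < a j + m2 := fun j => by linarith [ha j]
  have hlam' : lam ≠ 0 := ne_of_lt hlam
  refine ⟨⟨?_, by linarith [hpos j₀]⟩, ⟨?_, hpos k⟩⟩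
  · rw [second_var a c m2 lam f hfin j₀, hext]
    field_simp
    ring
  · rw [second_var a c m2 lam f hfin k, hfk]
    ring
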